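/- For a sequence of n ≥ 3 i.i.d. Bernoulli(p) trials with 0 < p < 1 and streak length k with 1 ≤ k ≤ n−2, the expected proportion of successes among trials that immediately follow k consecutive successes, conditional on at least one such trial existing, is strictly less than p. -/

import Mathlib

open Finset

/-- Probability weight of a Bernoulli(p) binary sequence. -/
def wgt {n : ℕ} (p : ℝ) (x : Fin n → Bool) : ℝ :=
  ∏ i, if x i then p else 1 - p

/-- The set of trials that immediately follow `k` consecutive successes. -/
def streakSet {n : ℕ} (k : ℕ) (x : Fin n → Bool) : Finset (Fin n) :=
  Finset.univ.filter (fun i : Fin n =>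
    k ≤ i.val ∧ ∀ j : Fin n, i.val - k ≤ j.val → j.val < i.val → x j = true)

/-- The proportion of successes on the trials that immediately follow `k`
consecutive successes. -/
noncomputable def phat {n : ℕ} (k : ℕ) (x : Fin n → Bool) : ℝ :=
  (∑ i ∈ streakSet k x, if x i then (1:ℝ) else 0) / ((streakSet k x).card : ℝ)

/-- Number of successes in the sequence. -/
def ones {n : ℕ} (x : Fin n → Bool) : ℕ :=
  (Finset.univ.filter (fun i => x i = true)).card

/- ------------------- auxiliary lemmas ------------------- -/

lemma mem_streakSet_iff {n k : ℕ} {x : Fin n → Bool} {i : Fin n} :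
    i ∈ streakSet k x ↔ k ≤ i.val ∧
      ∀ j : Fin n, i.val - k ≤ j.val → j.val < i.val → x j = true := by
  simp [streakSet]

/-- membership of `i` in the streak set only depends on coordinates before `i`. -/
lemma mem_streakSet_update_self {n k : ℕ} (x : Fin n → Bool) (i : Fin n) (c : Bool) :
    i ∈ streakSet k (Function.update x i c) ↔ i ∈ streakSet k x := by
  simp only [mem_streakSet_iff]
  constructor <;> rintro ⟨h1, h2⟩ <;> refine ⟨h1, fun j hj1 hj2 => ?_⟩
  · have hne : j ≠ i := fun h => absurd (congrArg Fin.val h) (Nat.ne_of_lt hj2)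
    have := h2 j hj1 hj2
    rwa [Function.update_of_ne hne] at this
  · have hne : j ≠ i := fun h => absurd (congrArg Fin.val h) (Nat.ne_of_lt hj2)
    rw [Function.update_of_ne hne]
    exact h2 j hj1 hj2

lemma streakSet_subset_update_true {n k : ℕ} (x : Fin n → Bool) (i : Fin n) :
    streakSet k x ⊆ streakSet k (Function.update x i true) := by
  intro m hm
  rw [mem_streakSet_iff] at hm ⊢
  refine ⟨hm.1, fun j hj1 hj2 => ?_⟩
  rcases eq_or_ne j i with rfl | h
  · simp
  · rw [Function.update_of_ne h]; exact hm.2 j hj1 hj2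

lemma wgt_nonneg {n : ℕ} {p : ℝ} (hp : 0 ≤ p) (hp1 : p ≤ 1) (x : Fin n → Bool) :
    0 ≤ wgt p x := by
  refine Finset.prod_nonneg fun j _ => ?_
  by_cases h : x j <;> simp [h, hp] <;> linarith

lemma wgt_split {n : ℕ} (p : ℝ) (x : Fin n → Bool) (i : Fin n) :
    wgt p x = (if x i then p else 1 - p) *
      ∏ j ∈ Finset.univ.erase i, (if x j then p else 1 - p) :=
  (Finset.mul_prod_erase Finset.univ _ (Finset.mem_univ i)).symm

lemma wgt_update {n : ℕ} (p : ℝ) (x : Fin n → Bool) (i : Fin n) (c : Bool) :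
    wgt p (Function.update x i c) = (if c then p else 1 - p) *
      ∏ j ∈ Finset.univ.erase i, (if x j then p else 1 - p) := by
  rw [wgt_split p _ i, Function.update_self]
  congr 1
  refine Finset.prod_congr rfl fun j hj => ?_
  rw [Function.update_of_ne (Finset.ne_of_mem_erase hj)]

/-- the per-position, per-sequence contribution. -/
noncomputable def G {n : ℕ} (p : ℝ) (k : ℕ) (i : Fin n) (x : Fin n → Bool) : ℝ :=
  if i ∈ streakSet k x then
    wgt p x * ((if x i then (1:ℝ) else 0) - p) / ((streakSet k x).card : ℝ)
  else 0

lemma step1 {n : ℕ} (p : ℝ) (k : ℕ) (x : Fin n → Bool) :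
    (if (streakSet k x).Nonempty then wgt p x * phat k x else 0) -
      p * (if (streakSet k x).Nonempty then wgt p x else 0) = ∑ i, G p k i x := by
  have hsum : ∑ i, G p k i x =
      ∑ i ∈ streakSet k x,
        wgt p x * ((if x i then (1:ℝ) else 0) - p) / ((streakSet k x).card : ℝ) := by
    simp only [G]
    rw [Finset.sum_ite_mem, Finset.univ_inter]
  rw [hsum]
  by_cases hN : (streakSet k x).Nonempty
  · simp only [hN, if_true]
    have hc : ((streakSet k x).card : ℝ) ≠ 0 :=
      Nat.cast_ne_zero.2 (Finset.card_ne_zero.mpr hN)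
    have h1 : ∑ i ∈ streakSet k x,
        wgt p x * ((if x i then (1:ℝ) else 0) - p) / ((streakSet k x).card : ℝ) =
        wgt p x / ((streakSet k x).card : ℝ) *
          (∑ i ∈ streakSet k x, (if x i then (1:ℝ) else 0)) -
          ((streakSet k x).card : ℝ) *
            (wgt p x * p / ((streakSet k x).card : ℝ)) := by
      rw [Finset.mul_sum, ← nsmul_eq_mul, ← Finset.sum_const, ← Finset.sum_sub_distrib]
      refine Finset.sum_congr rfl fun i _ => ?_
      ring
    rw [h1, phat]
    field_simp
  · rw [Finset.not_nonempty_iff_eq_empty] at hN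
    simp [hN]

lemma pair_le {n k : ℕ} {p : ℝ} (hp : 0 < p) (hp1 : p < 1) (i : Fin n)
    (x : Fin n → Bool) (hxi : x i = false) :
    G p k i x + G p k i (Function.update x i true) ≤ 0 := by
  by_cases hmem : i ∈ streakSet k x
  · have hmem' : i ∈ streakSet k (Function.update x i true) :=
      (mem_streakSet_update_self x i true).mpr hmem
    set R := ∏ j ∈ Finset.univ.erase i, (if x j then p else 1 - p) with hRdef
    have hR : 0 < R := Finset.prod_pos fun j _ => by
      by_cases h : x j <;> simp [h] <;> linarith
    have hc0 : 0 < ((streakSet k x).card : ℝ) := by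
      exact_mod_cast Finset.card_pos.mpr ⟨i, hmem⟩
    have hcc : ((streakSet k x).card : ℝ) ≤
        ((streakSet k (Function.update x i true)).card : ℝ) := by
      exact_mod_cast Finset.card_le_card (streakSet_subset_update_true x i)
    have hw : wgt p x = (1 - p) * R := by rw [wgt_split p x i, hxi]; simp; exact Or.inl rfl
    have hw' : wgt p (Function.update x i true) = p * R := by rw [wgt_update]; simp; exact Or.inl rfl
    simp only [G, hmem, hmem', if_true, hxi, Function.update_self, hw, hw']
    have key : p * (1 - p) * R / ((streakSet k (Function.update x i true)).card : ℝ) ≤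
        p * (1 - p) * R / ((streakSet k x).card : ℝ) :=
      div_le_div_of_nonneg_left (mul_nonneg (mul_nonneg hp.le (by linarith)) hR.le) hc0 hcc
    have e1 : (1 - p) * R * ((if (false : Bool) then (1:ℝ) else 0) - p) /
        ((streakSet k x).card : ℝ) =
        -(p * (1 - p) * R / ((streakSet k x).card : ℝ)) := by
      simp; ring
    have e2 : p * R * (1 - p) /
        ((streakSet k (Function.update x i true)).card : ℝ) =
        p * (1 - p) * R / ((streakSet k (Function.update x i true)).card : ℝ) := by
      ring
    rw [e1, e2]
    linarith
  · have hmem' : i ∉ streakSet k (Function.update x i true) := fun h =>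
      hmem ((mem_streakSet_update_self x i true).mp h)
    simp [G, hmem, hmem']

lemma pair_lt {n k : ℕ} {p : ℝ} (hp : 0 < p) (hp1 : p < 1) (i : Fin n)
    (x : Fin n → Bool) (hxi : x i = false) (hmem : i ∈ streakSet k x)
    (hcard : (streakSet k x).card < (streakSet k (Function.update x i true)).card) :
    G p k i x + G p k i (Function.update x i true) < 0 := by
  have hmem' : i ∈ streakSet k (Function.update x i true) :=
    (mem_streakSet_update_self x i true).mpr hmem
  set R := ∏ j ∈ Finset.univ.erase i, (if x j then p else 1 - p) with hRdef
  have hR : 0 < R := Finset.prod_pos fun j _ => by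
    by_cases h : x j <;> simp [h] <;> linarith
  have hc0 : 0 < ((streakSet k x).card : ℝ) := by
    exact_mod_cast Finset.card_pos.mpr ⟨i, hmem⟩
  have hcc : ((streakSet k x).card : ℝ) <
      ((streakSet k (Function.update x i true)).card : ℝ) := by exact_mod_cast hcard
  have hw : wgt p x = (1 - p) * R := by rw [wgt_split p x i, hxi]; simp; exact Or.inl rfl
  have hw' : wgt p (Function.update x i true) = p * R := by rw [wgt_update]; simp; exact Or.inl rfl
  simp only [G, hmem, hmem', if_true, hxi, Function.update_self, hw, hw']
  have key : p * (1 - p) * R / ((streakSet k (Function.update x i true)).card : ℝ) <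
      p * (1 - p) * R / ((streakSet k x).card : ℝ) :=
    div_lt_div_of_pos_left (mul_pos (mul_pos hp (by linarith)) hR) hc0 hcc
  have e1 : (1 - p) * R * ((if (false : Bool) then (1:ℝ) else 0) - p) /
      ((streakSet k x).card : ℝ) =
      -(p * (1 - p) * R / ((streakSet k x).card : ℝ)) := by
    simp; ring
  have e2 : p * R * (1 - p) /
      ((streakSet k (Function.update x i true)).card : ℝ) =
      p * (1 - p) * R / ((streakSet k (Function.update x i true)).card : ℝ) := by
    ring
  rw [e1, e2]
  linarith

lemma step3 {n : ℕ} (p : ℝ) (k : ℕ) (i : Fin n) :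
    ∑ x : Fin n → Bool, G p k i x =
      ∑ x ∈ Finset.univ.filter (fun x : Fin n → Bool => x i = false),
        (G p k i x + G p k i (Function.update x i true)) := by
  rw [Finset.sum_add_distrib,
    ← Finset.sum_filter_add_sum_filter_not Finset.univ (fun x : Fin n → Bool => x i = false)
      (G p k i)]
  congr 1
  refine Finset.sum_nbij' (fun x => Function.update x i false)
    (fun x => Function.update x i true) ?_ ?_ ?_ ?_ ?_
  · intro a ha
    simp [Function.update_self]
  · intro a ha
    simp [Function.update_self]
  · intro a ha
    have ha' : a i = true := by simpa using (Finset.mem_filter.mp ha).2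
    show Function.update (Function.update a i false) i true = a
    rw [Function.update_idem, ← ha', Function.update_eq_self]
  · intro a ha
    have ha' : a i = false := (Finset.mem_filter.mp ha).2
    show Function.update (Function.update a i true) i false = a
    rw [Function.update_idem, ← ha', Function.update_eq_self]
  · intro a ha
    have ha' : a i = true := by simpa using (Finset.mem_filter.mp ha).2
    show G p k i a = G p k i (Function.update (Function.update a i false) i true)
    rw [Function.update_idem, ← ha', Function.update_eq_self]

theorem stmt1 (n k : ℕ) (hn : 3 ≤ n) (hk : 1 ≤ k) (hk2 : k ≤ n - 2)
    (p : ℝ) (hp : 0 < p) (hp1 : p < 1) :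
    (∑ x : Fin n → Bool, if (streakSet k x).Nonempty then wgt p x * phat k x else 0) /
    (∑ x : Fin n → Bool, if (streakSet k x).Nonempty then wgt p x else 0) < p := by
  have hkn : k < n := by omega
  set i0 : Fin n := ⟨k, hkn⟩ with hi0
  have hi0mem : ∀ y : Fin n → Bool, (∀ j : Fin n, j.val < k → y j = true) →
      i0 ∈ streakSet k y := by
    intro y hy
    rw [mem_streakSet_iff]
    exact ⟨le_refl k, fun j _ hj2 => hy j hj2⟩
  have hDen : 0 < ∑ x : Fin n → Bool,
      if (streakSet k x).Nonempty then wgt p x else 0 := by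
    refine Finset.sum_pos' (fun x _ => ?_) ⟨(fun _ => true), Finset.mem_univ _, ?_⟩
    · split
      · exact wgt_nonneg hp.le hp1.le x
      · exact le_refl 0
    · have hne : (streakSet k (fun _ : Fin n => true)).Nonempty :=
        ⟨i0, hi0mem _ fun j _ => rfl⟩
      rw [if_pos hne]
      exact Finset.prod_pos fun j _ => by simp [hp]
  rw [div_lt_iff₀ hDen, ← sub_neg]
  have hrw : (∑ x : Fin n → Bool,
        if (streakSet k x).Nonempty then wgt p x * phat k x else 0) -
      p * (∑ x : Fin n → Bool, if (streakSet k x).Nonempty then wgt p x else 0) =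
      ∑ i : Fin n, ∑ x ∈ Finset.univ.filter (fun x : Fin n → Bool => x i = false),
        (G p k i x + G p k i (Function.update x i true)) := by
    rw [Finset.mul_sum, ← Finset.sum_sub_distrib]
    rw [Finset.sum_congr rfl fun x _ => step1 p k x, Finset.sum_comm]
    exact Finset.sum_congr rfl fun i _ => step3 p k i
  rw [hrw]
  have hzero : (0:ℝ) = ∑ _i : Fin n, (0:ℝ) := by simp
  rw [hzero]
  refine Finset.sum_lt_sum (fun i _ => ?_) ⟨i0, Finset.mem_univ i0, ?_⟩
  · refine Finset.sum_nonpos fun x hx => ?_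
    exact pair_le hp hp1 i x (Finset.mem_filter.mp hx).2
  · -- strict at i0 with witness x0
    set x0 : Fin n → Bool := fun j => if j = i0 then false else true with hx0
    have hx0i0 : x0 i0 = false := by simp [hx0]
    have hx0mem : x0 ∈ Finset.univ.filter (fun x : Fin n → Bool => x i0 = false) := by
      simp [hx0]
    have hzero' : (0:ℝ) = ∑ _x ∈ Finset.univ.filter
        (fun x : Fin n → Bool => x i0 = false), (0:ℝ) := by simp
    rw [hzero']
    refine Finset.sum_lt_sum (fun x hx => pair_le hp hp1 i0 x (Finset.mem_filter.mp hx).2)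
      ⟨x0, hx0mem, ?_⟩
    have hmem0 : i0 ∈ streakSet k x0 := by
      refine hi0mem x0 fun j hj => ?_
      have : j ≠ i0 := fun h => by subst h; exact absurd hj (lt_irrefl _)
      simp [hx0, this]
    have hupd : Function.update x0 i0 true = fun _ => true := by
      funext j
      rcases eq_or_ne j i0 with rfl | h
      · simp
      · rw [Function.update_of_ne h]; simp [hx0, h]
    have hm1lt : k + 1 < n := by omega
    set m1 : Fin n := ⟨k + 1, hm1lt⟩ with hm1
    have hm1mem : m1 ∈ streakSet k (Function.update x0 i0 true) := by
      rw [hupd, mem_streakSet_iff]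
      exact ⟨Nat.le_succ k, fun j _ _ => rfl⟩
    have hm1nmem : m1 ∉ streakSet k x0 := by
      intro h
      rw [mem_streakSet_iff] at h
      have hle : m1.val - k ≤ i0.val := by
        show k + 1 - k ≤ k
        omega
      have hlt : i0.val < m1.val := by
        show k < k + 1
        omega
      have h2 := h.2 i0 hle hlt
      rw [hx0i0] at h2
      exact Bool.false_ne_true h2
    have hcard : (streakSet k x0).card < (streakSet k (Function.update x0 i0 true)).card :=
      Finset.card_lt_card
        ((Finset.ssubset_iff_of_subset (streakSet_subset_update_true x0 i0)).mpr
          ⟨m1, hm1mem, hm1nmem⟩)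
    exact pair_lt hp hp1 i0 x0 hx0i0 hmem0 hcard
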